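/- Let f : (0,∞) → ℝ be continuous, bounded, with 0 < c ≤ f ≤ 1, and f(r) = 1 + O(1/r) as r → ∞. Let x(r) = ∫₀^r f(s)^{-2} ds. Then (1/x) ∫₁^x |f(r(t)) - 1| dt → 0 as x → ∞, where r(·) is the inverse of x(·). -/

import Mathlib

open Set Filter MeasureTheory

theorem cesaro_f_minus_one (f : ℝ → ℝ) (c : ℝ)
    (hcont : ContinuousOn f (Ioi 0)) (hc : 0 < c)
    (hbnd : ∀ s > 0, c ≤ f s ∧ f s ≤ 1)
    (hO : ∃ C R : ℝ, 0 < R ∧ ∀ r ≥ R, |f r - 1| ≤ C / r)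
    (x : ℝ → ℝ) (hx : ∀ r, x r = ∫ s in (0:ℝ)..r, ((f s) ^ 2)⁻¹)
    (rInv : ℝ → ℝ) (hrInv : ∀ y > 0, 0 < rInv y ∧ x (rInv y) = y) :
    Tendsto (fun X => (1 / X) * ∫ t in (1:ℝ)..X, |f (rInv t) - 1|) atTop (nhds 0) := by
  obtain ⟨C, R, hR, hCR⟩ := hO
  have hc1 : c ≤ 1 := le_trans (hbnd 1 one_pos).1 (hbnd 1 one_pos).2
  have hc2 : (0:ℝ) < c ^ 2 := by positivity
  set g : ℝ → ℝ := fun s => ((f s) ^ 2)⁻¹ with hgdef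
  -- pointwise bounds on g
  have hgbnd : ∀ s : ℝ, 0 < s → 1 ≤ g s ∧ g s ≤ (c ^ 2)⁻¹ := by
    intro s hs
    obtain ⟨h1, h2⟩ := hbnd s hs
    have hfpos : 0 < f s := lt_of_lt_of_le hc h1
    have hsq : c ^ 2 ≤ (f s) ^ 2 := by nlinarith
    have hsq1 : (f s) ^ 2 ≤ 1 := by nlinarith
    have hfsqpos : 0 < (f s) ^ 2 := by positivity
    constructor
    · rw [hgdef]; exact (one_le_inv₀ hfsqpos).2 hsq1
    · exact inv_anti₀ hc2 hsq
  -- measurability of g on (0, ∞)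
  have hgcont : ContinuousOn g (Ioi 0) := by
    apply ContinuousOn.inv₀ (hcont.pow 2)
    intro s hs
    have h := (hbnd s hs).1
    have : 0 < f s := lt_of_lt_of_le hc h
    exact pow_ne_zero 2 this.ne'
  have hgmeas : AEStronglyMeasurable g (volume.restrict (Ioi (0:ℝ))) :=
    (hgcont.aemeasurable measurableSet_Ioi).aestronglyMeasurable
  -- interval integrability of g on [a,b] ⊆ [0,∞)
  have hgint : ∀ a b : ℝ, 0 ≤ a → a ≤ b → IntervalIntegrable g volume a b := by
    intro a b ha hab
    rw [intervalIntegrable_iff_integrableOn_Ioc_of_le hab]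
    have hsub : Ioc a b ⊆ Ioi (0:ℝ) := fun t ht => lt_of_le_of_lt ha ht.1
    refine ⟨hgmeas.mono_measure (Measure.restrict_mono hsub le_rfl), ?_⟩
    apply MeasureTheory.HasFiniteIntegral.restrict_of_bounded
      (C := (c ^ 2)⁻¹) (measure_Ioc_lt_top)
    filter_upwards [ae_restrict_mem measurableSet_Ioc] with t ht
    have ht0 : 0 < t := lt_of_le_of_lt ha ht.1
    rw [Real.norm_eq_abs, abs_of_nonneg (by linarith [(hgbnd t ht0).1])]
    exact (hgbnd t ht0).2
  -- difference formula
  have hxdiff : ∀ r1 r2 : ℝ, 0 ≤ r1 → r1 ≤ r2 →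
      x r2 - x r1 = ∫ s in r1..r2, g s := by
    intro r1 r2 h1 h12
    rw [hx, hx]
    exact intervalIntegral.integral_interval_sub_left
      (hgint 0 r2 le_rfl (h1.trans h12)) (hgint 0 r1 le_rfl h1)
  -- lower and upper bounds on increments of x
  have hxlow : ∀ r1 r2 : ℝ, 0 ≤ r1 → r1 ≤ r2 → r2 - r1 ≤ x r2 - x r1 := by
    intro r1 r2 h1 h12
    rw [hxdiff r1 r2 h1 h12]
    have : ∫ s in r1..r2, (1:ℝ) ≤ ∫ s in r1..r2, g s := by
      rw [intervalIntegral.integral_of_le h12, intervalIntegral.integral_of_le h12]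
      apply MeasureTheory.setIntegral_mono_on
        (integrableOn_const measure_Ioc_lt_top.ne)
        ((intervalIntegrable_iff_integrableOn_Ioc_of_le h12).1 (hgint r1 r2 h1 h12))
        measurableSet_Ioc
      intro t ht
      exact (hgbnd t (lt_of_le_of_lt h1 ht.1)).1
    simpa using this
  have hxup : ∀ r1 r2 : ℝ, 0 ≤ r1 → r1 ≤ r2 → x r2 - x r1 ≤ (r2 - r1) * (c ^ 2)⁻¹ := by
    intro r1 r2 h1 h12
    rw [hxdiff r1 r2 h1 h12]
    have : ∫ s in r1..r2, g s ≤ ∫ s in r1..r2, (c ^ 2)⁻¹ := by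
      rw [intervalIntegral.integral_of_le h12, intervalIntegral.integral_of_le h12]
      apply MeasureTheory.setIntegral_mono_on
        ((intervalIntegrable_iff_integrableOn_Ioc_of_le h12).1 (hgint r1 r2 h1 h12))
        (integrableOn_const measure_Ioc_lt_top.ne)
        measurableSet_Ioc
      intro t ht
      exact (hgbnd t (lt_of_le_of_lt h1 ht.1)).2
    simpa [mul_comm] using this
  have hx0 : x 0 = 0 := by rw [hx]; simp
  -- bounds on rInv
  have hrle : ∀ y : ℝ, 0 < y → rInv y ≤ y := by
    intro y hy
    obtain ⟨hpos, hxy⟩ := hrInv y hy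
    have := hxlow 0 (rInv y) le_rfl hpos.le
    rw [hx0, hxy] at this; linarith
  have hrge : ∀ y : ℝ, 0 < y → c ^ 2 * y ≤ rInv y := by
    intro y hy
    obtain ⟨hpos, hxy⟩ := hrInv y hy
    have := hxup 0 (rInv y) le_rfl hpos.le
    rw [hx0, hxy] at this
    have h2 : y * c ^ 2 ≤ rInv y := by
      rw [sub_zero, sub_zero] at this
      calc y * c ^ 2 ≤ (rInv y * (c ^ 2)⁻¹) * c ^ 2 := by
            apply mul_le_mul_of_nonneg_right (by linarith) hc2.le
        _ = rInv y := by field_simp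
    linarith [h2]
  -- monotonicity of rInv on positives
  have hrmono : ∀ a b : ℝ, 0 < a → a ≤ b → rInv a ≤ rInv b := by
    intro a b ha hab
    by_contra h
    push_neg at h
    have h1 := hxlow (rInv b) (rInv a) (hrInv b (ha.trans_le hab)).1.le h.le
    rw [(hrInv a ha).2, (hrInv b (ha.trans_le hab)).2] at h1
    linarith
  -- the capped composition
  set F : ℝ → ℝ := fun s => f (max s (c ^ 2)) with hFdef
  have hFcont : Continuous F := by
    rw [← continuousOn_univ]
    apply hcont.comp ((continuous_id.max continuous_const).continuousOn)
    intro s _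
    exact lt_of_lt_of_le hc2 (le_max_right _ _)
  set ρ : ℝ → ℝ := fun t => rInv (max t 1) with hρdef
  have hρmono : Monotone ρ := by
    intro a b hab
    exact hrmono (max a 1) (max b 1) (lt_of_lt_of_le one_pos (le_max_right _ _))
      (max_le_max hab le_rfl)
  set G : ℝ → ℝ := fun t => |F (ρ t) - 1| with hGdef
  have hGmeas : Measurable G :=
    ((hFcont.measurable.comp hρmono.measurable).sub measurable_const).abs
  have hFrange : ∀ t : ℝ, c ≤ F (ρ t) ∧ F (ρ t) ≤ 1 := by
    intro t
    exact hbnd _ (lt_of_lt_of_le hc2 (le_max_right _ _))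
  have hGbound : ∀ t : ℝ, G t ≤ 1 := by
    intro t
    obtain ⟨h1, h2⟩ := hFrange t
    rw [hGdef]
    rw [abs_le]
    constructor
    · linarith
    · linarith
  have hGnonneg : ∀ t : ℝ, 0 ≤ G t := fun t => abs_nonneg _
  have hGint : ∀ a b : ℝ, IntervalIntegrable G volume a b := by
    intro a b
    apply IntervalIntegrable.mono_fun (f := fun _ : ℝ => (1:ℝ))
      (intervalIntegrable_const) hGmeas.aestronglyMeasurable
    apply ae_of_all
    intro t
    simp only [Real.norm_eq_abs, abs_one, abs_of_nonneg (hGnonneg t)]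
    exact hGbound t
  -- G agrees with the original integrand for t ≥ 1
  have hGeq : ∀ t : ℝ, 1 ≤ t → G t = |f (rInv t) - 1| := by
    intro t ht
    have hmax : max t 1 = t := max_eq_left ht
    have hrt : c ^ 2 ≤ rInv t := by
      have := hrge t (lt_of_lt_of_le one_pos ht)
      nlinarith
    rw [hGdef]
    simp only [hρdef, hFdef, hmax, max_eq_left hrt]
  -- C is nonnegative
  have hC : 0 ≤ C := by
    have h1 := hCR R le_rfl
    have h2 : (0:ℝ) ≤ C / R := le_trans (abs_nonneg _) h1
    have := (div_nonneg_iff.1 h2)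
    rcases this with ⟨h, _⟩ | ⟨_, h⟩
    · exact h
    · linarith
  set T0 : ℝ := max 1 (R / c ^ 2) with hT0def
  have hT01 : (1:ℝ) ≤ T0 := le_max_left _ _
  have hT0R : R / c ^ 2 ≤ T0 := le_max_right _ _
  set K : ℝ := C / c ^ 2 with hKdef
  have hK : 0 ≤ K := div_nonneg hC hc2.le
  -- key estimate
  have key : ∀ X : ℝ, T0 ≤ X →
      (∫ t in (1:ℝ)..X, |f (rInv t) - 1|) ≤ (T0 - 1) + K * Real.log X := by
    intro X hX
    have h1X : (1:ℝ) ≤ X := hT01.trans hX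
    have heq : (∫ t in (1:ℝ)..X, |f (rInv t) - 1|) = ∫ t in (1:ℝ)..X, G t := by
      apply intervalIntegral.integral_congr
      intro t ht
      rw [uIcc_of_le h1X] at ht
      exact (hGeq t ht.1).symm
    rw [heq, ← intervalIntegral.integral_add_adjacent_intervals (hGint 1 T0) (hGint T0 X)]
    have part1 : (∫ t in (1:ℝ)..T0, G t) ≤ T0 - 1 := by
      have := intervalIntegral.integral_mono_on hT01 (hGint 1 T0)
        (intervalIntegrable_const (c := (1:ℝ))) (fun t _ => hGbound t)
      simpa using this
    have part2 : (∫ t in T0..X, G t) ≤ K * Real.log X := by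
      have hint1t : IntervalIntegrable (fun t : ℝ => K * (1 / t)) volume T0 X := by
        apply ContinuousOn.intervalIntegrable
        apply continuousOn_const.mul (continuousOn_const.div continuousOn_id _)
        intro t ht
        rw [uIcc_of_le hX] at ht
        have : (0:ℝ) < t := lt_of_lt_of_le (lt_of_lt_of_le one_pos hT01) ht.1
        exact ne_of_gt this
      have hmono2 : (∫ t in T0..X, G t) ≤ ∫ t in T0..X, K * (1 / t) := by
        apply intervalIntegral.integral_mono_on hX (hGint T0 X) hint1t
        intro t ht
        have ht1 : (1:ℝ) ≤ t := hT01.trans ht.1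
        have htpos : (0:ℝ) < t := lt_of_lt_of_le one_pos ht1
        have hrt2 : c ^ 2 * t ≤ rInv t := hrge t htpos
        have hrtpos : 0 < rInv t := (hrInv t htpos).1
        have hrtR : R ≤ rInv t := by
          have : R / c ^ 2 ≤ t := hT0R.trans ht.1
          have : R ≤ c ^ 2 * t := by
            calc R = (R / c ^ 2) * c ^ 2 := by field_simp
              _ ≤ t * c ^ 2 := mul_le_mul_of_nonneg_right this hc2.le
              _ = c ^ 2 * t := mul_comm _ _
          linarith
        rw [hGeq t ht1]
        calc |f (rInv t) - 1| ≤ C / rInv t := hCR _ hrtR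
          _ ≤ C / (c ^ 2 * t) := by
              apply div_le_div_of_nonneg_left hC (by positivity) hrt2
          _ = K * (1 / t) := by rw [hKdef]; field_simp
      have hcalc : (∫ t in T0..X, K * (1 / t)) = K * Real.log (X / T0) := by
        rw [intervalIntegral.integral_const_mul,
          integral_one_div_of_pos (lt_of_lt_of_le one_pos hT01)
            (lt_of_lt_of_le one_pos (hT01.trans hX))]
      have hlog : Real.log (X / T0) ≤ Real.log X := by
        apply Real.log_le_log (by positivity)
        calc X / T0 ≤ X / 1 := by
              apply div_le_div_of_nonneg_left (by linarith) one_pos hT01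
          _ = X := div_one X
      calc (∫ t in T0..X, G t) ≤ K * Real.log (X / T0) := by rw [← hcalc]; exact hmono2
        _ ≤ K * Real.log X := mul_le_mul_of_nonneg_left hlog hK
    linarith
  -- squeeze
  apply squeeze_zero'
  · filter_upwards [eventually_ge_atTop (1:ℝ)] with X hX
    apply mul_nonneg (by positivity)
    exact intervalIntegral.integral_nonneg hX (fun u _ => abs_nonneg _)
  · filter_upwards [eventually_ge_atTop T0, eventually_gt_atTop (0:ℝ)] with X hX hX0
    exact mul_le_mul_of_nonneg_left (key X hX) (by positivity)
  · have h1 : Tendsto (fun X : ℝ => (T0 - 1) * X⁻¹) atTop (nhds 0) := by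
      simpa using tendsto_inv_atTop_zero.const_mul (T0 - 1)
    have h2 : Tendsto (fun X : ℝ => K * (Real.log X / X)) atTop (nhds 0) := by
      simpa using (Real.isLittleO_log_id_atTop.tendsto_div_nhds_zero).const_mul K
    have := h1.add h2
    rw [add_zero] at this
    apply this.congr
    intro X
    ring
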